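/- Fix k ∈ ℝ, k ≠ 0. Let u : ℝ² → ℝ⁶ be of class C¹, let g ∈ SO(2) be a rotation of ℝ², and define (g⋆u)(x) := g̃·u(g⁻¹x), where g̃ ∈ ℝ^{6×6} is the block-diagonal matrix diag(g, 1, g, 1). Then for every x ∈ ℝ², |curl∘(g⋆u)(x)| = |curl∘u(g⁻¹x)|, where |·| is the Euclidean norm on ℝ⁶. -/

import Mathlib

/-- First partial derivative of a function on ℝ². -/
noncomputable def pd1 (f : ℝ × ℝ → ℝ) (x : ℝ × ℝ) : ℝ := fderiv ℝ f x (1, 0)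

/-- Second partial derivative of a function on ℝ². -/
noncomputable def pd2 (f : ℝ × ℝ → ℝ) (x : ℝ × ℝ) : ℝ := fderiv ℝ f x (0, 1)

/-- The operator `curl∘` acting on fields `u : ℝ² → ℝ⁶`, with wave number `k`. -/
noncomputable def curlC (k : ℝ) (u : ℝ × ℝ → Fin 6 → ℝ) (x : ℝ × ℝ) : Fin 6 → ℝ :=
  ![pd2 (fun y => u y 2) x - k * u x 4,
    k * u x 3 - pd1 (fun y => u y 2) x,
    pd1 (fun y => u y 1) x - pd2 (fun y => u y 0) x,
    pd2 (fun y => u y 5) x + k * u x 1,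
    -(k * u x 0) - pd1 (fun y => u y 5) x,
    pd1 (fun y => u y 4) x - pd2 (fun y => u y 3) x]

/-- Rotation of ℝ² by the angle θ. -/
noncomputable def rot (θ : ℝ) (x : ℝ × ℝ) : ℝ × ℝ :=
  (x.1 * Real.cos θ - x.2 * Real.sin θ, x.1 * Real.sin θ + x.2 * Real.cos θ)

/-- The action `g ⋆ u` of the rotation by θ on a field `u : ℝ² → ℝ⁶`,
i.e. `(g ⋆ u)(x) = diag(g,1,g,1) · u (g⁻¹ x)`. -/
noncomputable def gstar (θ : ℝ) (u : ℝ × ℝ → Fin 6 → ℝ) (x : ℝ × ℝ) : Fin 6 → ℝ :=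
  ![Real.cos θ * u (rot (-θ) x) 0 - Real.sin θ * u (rot (-θ) x) 1,
    Real.sin θ * u (rot (-θ) x) 0 + Real.cos θ * u (rot (-θ) x) 1,
    u (rot (-θ) x) 2,
    Real.cos θ * u (rot (-θ) x) 3 - Real.sin θ * u (rot (-θ) x) 4,
    Real.sin θ * u (rot (-θ) x) 3 + Real.cos θ * u (rot (-θ) x) 4,
    u (rot (-θ) x) 5]


@[simp] lemma vec6_0 (a b c d e f : ℝ) : ![a,b,c,d,e,f] (0:Fin 6) = a := rfl
@[simp] lemma vec6_1 (a b c d e f : ℝ) : ![a,b,c,d,e,f] (1:Fin 6) = b := rfl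
@[simp] lemma vec6_2 (a b c d e f : ℝ) : ![a,b,c,d,e,f] (2:Fin 6) = c := rfl
@[simp] lemma vec6_3 (a b c d e f : ℝ) : ![a,b,c,d,e,f] (3:Fin 6) = d := rfl
@[simp] lemma vec6_4 (a b c d e f : ℝ) : ![a,b,c,d,e,f] (4:Fin 6) = e := rfl
@[simp] lemma vec6_5 (a b c d e f : ℝ) : ![a,b,c,d,e,f] (5:Fin 6) = f := rfl

/-- The rotation as a continuous linear map. -/
noncomputable def rotL (φ : ℝ) : (ℝ × ℝ) →L[ℝ] (ℝ × ℝ) :=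
  ((Real.cos φ • ContinuousLinearMap.fst ℝ ℝ ℝ) - (Real.sin φ • ContinuousLinearMap.snd ℝ ℝ ℝ)).prod
    ((Real.sin φ • ContinuousLinearMap.fst ℝ ℝ ℝ) + (Real.cos φ • ContinuousLinearMap.snd ℝ ℝ ℝ))

lemma rotL_apply (φ : ℝ) (x : ℝ × ℝ) : rotL φ x = rot φ x := by
  simp only [rotL, rot, ContinuousLinearMap.prod_apply, ContinuousLinearMap.add_apply,
    ContinuousLinearMap.sub_apply, ContinuousLinearMap.smul_apply,
    ContinuousLinearMap.coe_fst', ContinuousLinearMap.coe_snd', smul_eq_mul, Prod.mk.injEq]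
  constructor <;> ring

lemma contDiff_rot (φ : ℝ) : ContDiff ℝ 1 (rot φ) := by
  have : rot φ = fun x => rotL φ x := by funext x; rw [rotL_apply]
  rw [this]; exact (rotL φ).contDiff

lemma pd_rot (f : ℝ × ℝ → ℝ) (hf : ContDiff ℝ 1 f) (θ : ℝ) (x : ℝ × ℝ) :
    pd1 (fun y => f (rot (-θ) y)) x
        = Real.cos θ * pd1 f (rot (-θ) x) - Real.sin θ * pd2 f (rot (-θ) x)
      ∧ pd2 (fun y => f (rot (-θ) y)) x
        = Real.sin θ * pd1 f (rot (-θ) x) + Real.cos θ * pd2 f (rot (-θ) x) := by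
  have hcomp : (fun y => f (rot (-θ) y)) = f ∘ (rotL (-θ)) := by
    funext y; simp [Function.comp, rotL_apply]
  have hd : DifferentiableAt ℝ f (rotL (-θ) x) := (hf.differentiable one_ne_zero).differentiableAt
  have h1 : fderiv ℝ (fun y => f (rot (-θ) y)) x
      = (fderiv ℝ f (rotL (-θ) x)).comp (rotL (-θ)) := by
    rw [hcomp, fderiv_comp x hd (rotL (-θ)).differentiableAt, (rotL (-θ)).fderiv]
  have h2 : rotL (-θ) ((1 : ℝ), (0 : ℝ)) = (Real.cos θ, -Real.sin θ) := by
    simp [rotL]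
  have h2' : rotL (-θ) ((0 : ℝ), (1 : ℝ)) = (Real.sin θ, Real.cos θ) := by
    simp [rotL]
  have h3 : ((Real.cos θ, -Real.sin θ) : ℝ × ℝ)
      = Real.cos θ • ((1 : ℝ), (0 : ℝ)) + (-Real.sin θ) • ((0 : ℝ), (1 : ℝ)) := by
    simp [Prod.ext_iff]
  have h3' : ((Real.sin θ, Real.cos θ) : ℝ × ℝ)
      = Real.sin θ • ((1 : ℝ), (0 : ℝ)) + Real.cos θ • ((0 : ℝ), (1 : ℝ)) := by
    simp [Prod.ext_iff]
  constructor <;>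
  · simp only [pd1, pd2, h1, ContinuousLinearMap.comp_apply, h2, h2', rotL_apply, h3, h3',
      map_add, map_smul, smul_eq_mul]
    try ring

lemma pd1_comb (f g : ℝ × ℝ → ℝ) (a b : ℝ) (x : ℝ × ℝ)
    (hf : DifferentiableAt ℝ f x) (hg : DifferentiableAt ℝ g x) :
    pd1 (fun y => a * f y + b * g y) x = a * pd1 f x + b * pd1 g x := by
  simp only [pd1]
  rw [fderiv_fun_add (hf.const_mul a) (hg.const_mul b), fderiv_const_mul hf, fderiv_const_mul hg]
  simp

lemma pd2_comb (f g : ℝ × ℝ → ℝ) (a b : ℝ) (x : ℝ × ℝ)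
    (hf : DifferentiableAt ℝ f x) (hg : DifferentiableAt ℝ g x) :
    pd2 (fun y => a * f y + b * g y) x = a * pd2 f x + b * pd2 g x := by
  simp only [pd2]
  rw [fderiv_fun_add (hf.const_mul a) (hg.const_mul b), fderiv_const_mul hf, fderiv_const_mul hg]
  simp

/-- `|curl∘ (g ⋆ u) (x)| = |curl∘ u (g⁻¹ x)|` for every rotation `g` and every `x`. -/
theorem stmt12 (k : ℝ) (hk : k ≠ 0) (u : ℝ × ℝ → Fin 6 → ℝ)
    (hu : ∀ i, ContDiff ℝ 1 fun x => u x i) (θ : ℝ) (x : ℝ × ℝ) :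
    Real.sqrt (∑ i, (curlC k (gstar θ u) x i) ^ 2)
      = Real.sqrt (∑ i, (curlC k u (rot (-θ) x) i) ^ 2) := by
  have hRd : ∀ (i : Fin 6) (z : ℝ × ℝ), DifferentiableAt ℝ (fun y => u (rot (-θ) y) i) z :=
    fun i z => (((hu i).comp (contDiff_rot (-θ))).differentiable one_ne_zero).differentiableAt
  have p1 : ∀ i : Fin 6, pd1 (fun z => u (rot (-θ) z) i) x
      = Real.cos θ * pd1 (fun z => u z i) (rot (-θ) x)
        - Real.sin θ * pd2 (fun z => u z i) (rot (-θ) x) :=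
    fun i => (pd_rot (fun z => u z i) (hu i) θ x).1
  have p2 : ∀ i : Fin 6, pd2 (fun z => u (rot (-θ) z) i) x
      = Real.sin θ * pd1 (fun z => u z i) (rot (-θ) x)
        + Real.cos θ * pd2 (fun z => u z i) (rot (-θ) x) :=
    fun i => (pd_rot (fun z => u z i) (hu i) θ x).2
  have e0 : (fun z => gstar θ u z 0)
      = fun z => Real.cos θ * u (rot (-θ) z) 0 + (-Real.sin θ) * u (rot (-θ) z) 1 := by
    funext z; simp only [gstar, vec6_0]; ring
  have e1 : (fun z => gstar θ u z 1)
      = fun z => Real.sin θ * u (rot (-θ) z) 0 + Real.cos θ * u (rot (-θ) z) 1 := by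
    funext z; simp only [gstar, vec6_1]
  have e2 : (fun z => gstar θ u z 2) = fun z => u (rot (-θ) z) 2 := by
    funext z; simp only [gstar, vec6_2]
  have e3 : (fun z => gstar θ u z 3)
      = fun z => Real.cos θ * u (rot (-θ) z) 3 + (-Real.sin θ) * u (rot (-θ) z) 4 := by
    funext z; simp only [gstar, vec6_3]; ring
  have e4 : (fun z => gstar θ u z 4)
      = fun z => Real.sin θ * u (rot (-θ) z) 3 + Real.cos θ * u (rot (-θ) z) 4 := by
    funext z; simp only [gstar, vec6_4]
  have e5 : (fun z => gstar θ u z 5) = fun z => u (rot (-θ) z) 5 := by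
    funext z; simp only [gstar, vec6_5]
  have hsc : Real.sin θ ^ 2 + Real.cos θ ^ 2 = 1 := Real.sin_sq_add_cos_sq θ
  have key : ∑ i, (curlC k (gstar θ u) x i) ^ 2 = ∑ i, (curlC k u (rot (-θ) x) i) ^ 2 := by
    simp only [curlC, Fin.sum_univ_six, vec6_0, vec6_1, vec6_2, vec6_3, vec6_4, vec6_5]
    rw [e2, e5, congrFun e0 x, congrFun e1 x, congrFun e3 x, congrFun e4 x,
      show (fun z => gstar θ u z 1) = _ from e1,
      show (fun z => gstar θ u z 0) = _ from e0,
      show (fun z => gstar θ u z 4) = _ from e4,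
      show (fun z => gstar θ u z 3) = _ from e3,
      pd1_comb _ _ _ _ x (hRd 0 x) (hRd 1 x), pd2_comb _ _ _ _ x (hRd 0 x) (hRd 1 x),
      pd1_comb _ _ _ _ x (hRd 3 x) (hRd 4 x), pd2_comb _ _ _ _ x (hRd 3 x) (hRd 4 x),
      p1 0, p1 1, p1 2, p1 3, p1 4, p1 5, p2 0, p2 1, p2 2, p2 3, p2 4, p2 5]
    linear_combination
      ((pd2 (fun z => u z 2) (rot (-θ) x) - k * u (rot (-θ) x) 4) ^ 2
        + (k * u (rot (-θ) x) 3 - pd1 (fun z => u z 2) (rot (-θ) x)) ^ 2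
        + (pd2 (fun z => u z 5) (rot (-θ) x) + k * u (rot (-θ) x) 1) ^ 2
        + (-(k * u (rot (-θ) x) 0) - pd1 (fun z => u z 5) (rot (-θ) x)) ^ 2
        + (Real.sin θ ^ 2 + Real.cos θ ^ 2 + 1)
          * ((pd1 (fun z => u z 1) (rot (-θ) x) - pd2 (fun z => u z 0) (rot (-θ) x)) ^ 2
            + (pd1 (fun z => u z 4) (rot (-θ) x) - pd2 (fun z => u z 3) (rot (-θ) x)) ^ 2)) * hsc
  rw [key]
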